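/- Fix naturals a, b and define h : ℤ → ℕ with h n = 0 for n < 0, h 0 = 1, h 1 = a, h 2 = a^2 + b, h 3 = a^3 + 3ab, and h n = a*h(n-1) + b*h(n-2) + a*b*h(n-3) + b^2*h(n-4) for n ≥ 4. Then for all m, n ≥ 0: h(m+n) = h m * h n + h(m-1)*(b*h(n-1) + a*b*h(n-2) + b^2*h(n-3)) + h(m-2)*(a*b*h(n-1) + b^2*h(n-2)) + b^2 * h(n-1) * h(m-3). -/

import Mathlib

theorem stmt_6 (a b : ℕ) (h : ℤ → ℕ)
    (hneg : ∀ n : ℤ, n < 0 → h n = 0)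
    (h0 : h 0 = 1) (h1 : h 1 = a) (h2 : h 2 = a ^ 2 + b) (h3 : h 3 = a ^ 3 + 3 * a * b)
    (hrec : ∀ n : ℤ, 4 ≤ n →
      h n = a * h (n - 1) + b * h (n - 2) + a * b * h (n - 3) + b ^ 2 * h (n - 4)) :
    ∀ m n : ℤ, 0 ≤ m → 0 ≤ n →
      h (m + n) = h m * h n
        + h (m - 1) * (b * h (n - 1) + a * b * h (n - 2) + b ^ 2 * h (n - 3))
        + h (m - 2) * (a * b * h (n - 1) + b ^ 2 * h (n - 2))
        + b ^ 2 * h (n - 1) * h (m - 3) := by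
  -- recurrence holds for all n ≥ 1
  have hrec1 : ∀ n : ℤ, 1 ≤ n →
      h n = a * h (n - 1) + b * h (n - 2) + a * b * h (n - 3) + b ^ 2 * h (n - 4) := by
    intro n hn
    by_cases h4 : 4 ≤ n
    · exact hrec n h4
    · push_neg at h4
      interval_cases n
      · simp [h0, h1, hneg (-1 : ℤ) (by norm_num), hneg (-2 : ℤ) (by norm_num),
          hneg (-3 : ℤ) (by norm_num)]
      · rw [show (2:ℤ) - 1 = 1 by ring, show (2:ℤ) - 2 = 0 by ring,
          show (2:ℤ) - 3 = -1 by ring, show (2:ℤ) - 4 = -2 by ring,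
          h0, h1, h2, hneg (-1 : ℤ) (by norm_num), hneg (-2 : ℤ) (by norm_num)]
        ring
      · rw [show (3:ℤ) - 1 = 2 by ring, show (3:ℤ) - 2 = 1 by ring,
          show (3:ℤ) - 3 = 0 by ring, show (3:ℤ) - 4 = -1 by ring,
          h0, h1, h2, h3, hneg (-1 : ℤ) (by norm_num)]
        ring
  suffices key : ∀ k : ℕ, ∀ m : ℤ, 0 ≤ m →
      h (m + k) = h m * h k
        + h (m - 1) * (b * h (k - 1) + a * b * h (k - 2) + b ^ 2 * h (k - 3))
        + h (m - 2) * (a * b * h (k - 1) + b ^ 2 * h (k - 2))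
        + b ^ 2 * h (k - 1) * h (m - 3) by
    intro m n hm hn
    lift n to ℕ using hn
    exact key n m hm
  intro k
  induction k using Nat.strong_induction_on with
  | _ k ih =>
    intro m hm
    match k with
    | 0 =>
      rw [show ((0:ℕ):ℤ) = 0 by norm_num]
      rw [show (0:ℤ) - 1 = -1 by ring, show (0:ℤ) - 2 = -2 by ring,
        show (0:ℤ) - 3 = -3 by ring, h0,
        hneg (-1 : ℤ) (by norm_num), hneg (-2 : ℤ) (by norm_num), hneg (-3 : ℤ) (by norm_num)]
      ring_nf
    | 1 =>
      rw [show ((1:ℕ):ℤ) = 1 by norm_num]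
      have E := hrec1 (m + 1) (by linarith)
      rw [show (1:ℤ) - 1 = 0 by ring, show (1:ℤ) - 2 = -1 by ring,
        show (1:ℤ) - 3 = -2 by ring, h0, h1,
        hneg (-1 : ℤ) (by norm_num), hneg (-2 : ℤ) (by norm_num), E]
      ring_nf
    | 2 =>
      rw [show ((2:ℕ):ℤ) = 2 by norm_num]
      have E2 := hrec1 (m + 2) (by linarith)
      have E1 := hrec1 (m + 1) (by linarith)
      rw [show m + 2 - 1 = m + 1 by ring, E1] at E2
      rw [show (2:ℤ) - 1 = 1 by ring, show (2:ℤ) - 2 = 0 by ring,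
        show (2:ℤ) - 3 = -1 by ring, h0, h1, h2,
        hneg (-1 : ℤ) (by norm_num), E2]
      ring_nf
    | 3 =>
      rw [show ((3:ℕ):ℤ) = 3 by norm_num]
      have E3 := hrec1 (m + 3) (by linarith)
      have E2 := hrec1 (m + 2) (by linarith)
      have E1 := hrec1 (m + 1) (by linarith)
      rw [show m + 2 - 1 = m + 1 by ring, E1] at E2
      rw [show m + 3 - 1 = m + 2 by ring, show m + 3 - 2 = m + 1 by ring, E2, E1] at E3
      rw [show (3:ℤ) - 1 = 2 by ring, show (3:ℤ) - 2 = 1 by ring,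
        show (3:ℤ) - 3 = 0 by ring, h0, h1, h2, h3, E3]
      ring_nf
    | (j + 4) =>
      have hk : ((j:ℤ) + 4) = ((j + 4 : ℕ) : ℤ) := by push_cast; ring
      set n : ℤ := (j:ℤ) + 4 with hn
      have hn4 : 4 ≤ n := by omega
      have E := hrec1 (m + n) (by linarith)
      have I1 := ih (j + 3) (by omega) m hm
      have I2 := ih (j + 2) (by omega) m hm
      have I3 := ih (j + 1) (by omega) m hm
      have I4 := ih j (by omega) m hm
      have R0 := hrec1 n (by linarith)
      have R1 := hrec1 (n - 1) (by linarith)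
      have R2 := hrec1 (n - 2) (by linarith)
      have R3 := hrec1 (n - 3) (by linarith)
      rw [← hk]
      zify at E I1 I2 I3 I4 R0 R1 R2 R3 ⊢
      simp only [hn] at E R0 R1 R2 R3 ⊢
      linear_combination (norm := ring_nf)
        E + (a : ℤ) * I1 + (b : ℤ) * I2 + ((a:ℤ) * b) * I3 + ((b:ℤ)^2) * I4
        - (h m : ℤ) * R0
        - ((h (m-1) : ℤ) * b + (h (m-2) : ℤ) * a * b + (b:ℤ)^2 * (h (m-3) : ℤ)) * R1
        - ((h (m-1) : ℤ) * a * b + (h (m-2) : ℤ) * (b:ℤ)^2) * R2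
        - ((h (m-1) : ℤ) * (b:ℤ)^2) * R3
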